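/- Let k = 2 and m ≥ 2. The algebra C_2m^{(0)} equals the unital K-subalgebra of M_2(Ω) generated by the matrices z_i² for i = 1,…,m, z_i z_j + z_j z_i for 1 ≤ i ≤ j ≤ m, and s_3(z_{i_1}, z_{i_2}, z_{i_3}) for 1 ≤ i_1 < i_2 < i_3 ≤ m, where s_3(x_1,x_2,x_3) = ∑_{σ∈S_3} sign(σ)·x_{σ(1)}x_{σ(2)}x_{σ(3)} is the standard polynomial of degree 3. -/

import Mathlib

open scoped BigOperators
noncomputable section

/-- `Ω = K[y_pq^(i)]`, matrices over the polynomial ring in `k²m` variables. -/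
abbrev Mat (K : Type) [Field K] (k m : ℕ) :=
  Matrix (Fin k) (Fin k) (MvPolynomial (Fin m × Fin k × Fin k) K)

/-- The generic `k × k` matrices `y_i = (y_pq^(i))`. -/
def genY (K : Type) [Field K] (k m : ℕ) (i : Fin m) : Mat K k m :=
  Matrix.of fun p q => MvPolynomial.X (i, p, q)

/-- The scalar matrix `f · I` for `f ∈ Ω`. -/
def scalarOf (K : Type) [Field K] (k m : ℕ)
    (f : MvPolynomial (Fin m × Fin k × Fin k) K) : Mat K k m :=
  algebraMap _ _ f

/-- `R_km`: the generic matrix algebra, generated by `y_1, …, y_m`. -/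
def Rkm (K : Type) [Field K] (k m : ℕ) : Subalgebra K (Mat K k m) :=
  Algebra.adjoin K (Set.range (genY K k m))

/-- `C_km`: the pure trace algebra, generated by the `tr(y_{i_1} ⋯ y_{i_l}) · I`, `l ≥ 1`. -/
def Ckm (K : Type) [Field K] (k m : ℕ) : Subalgebra K (Mat K k m) :=
  Algebra.adjoin K
    {x | ∃ (l : ℕ) (w : Fin (l + 1) → Fin m),
      x = scalarOf K k m (Matrix.trace ((List.ofFn fun j => genY K k m (w j)).prod))}

/-- `T_km`: the mixed trace algebra, generated by `R_km ∪ C_km`. -/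
def Tkm (K : Type) [Field K] (k m : ℕ) : Subalgebra K (Mat K k m) :=
  Rkm K k m ⊔ Ckm K k m

/-- The generic traceless matrices `z_i = y_i - (1/k)·tr(y_i)·I`. -/
def genZ (K : Type) [Field K] (k m : ℕ) (i : Fin m) : Mat K k m :=
  genY K k m i - (k : K)⁻¹ • scalarOf K k m (Matrix.trace (genY K k m i))

/-- `W_km`: the algebra generated by the generic traceless matrices `z_1, …, z_m`. -/
def Wkm (K : Type) [Field K] (k m : ℕ) : Subalgebra K (Mat K k m) :=
  Algebra.adjoin K (Set.range (genZ K k m))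

/-- `C_km⁰`: the algebra generated by the `tr(z_{i_1} ⋯ z_{i_l}) · I`, `l ≥ 1`. -/
def Ckm0 (K : Type) [Field K] (k m : ℕ) : Subalgebra K (Mat K k m) :=
  Algebra.adjoin K
    {x | ∃ (l : ℕ) (w : Fin (l + 1) → Fin m),
      x = scalarOf K k m (Matrix.trace ((List.ofFn fun j => genZ K k m (w j)).prod))}

/-- `T_km⁰`: the algebra generated by `W_km ∪ C_km⁰`. -/
def Tkm0 (K : Type) [Field K] (k m : ℕ) : Subalgebra K (Mat K k m) :=
  Wkm K k m ⊔ Ckm0 K k m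

/-- The subspace of matrices all of whose entries have total degree at most `n`,
i.e. `M_k(Ω_{≤n})`. -/
def degLE (K : Type) [Field K] (k m n : ℕ) : Submodule K (Mat K k m) where
  carrier := {a | ∀ p q, (a p q).totalDegree ≤ n}
  add_mem' := by
    intro a b ha hb p q
    calc ((a + b) p q).totalDegree = (a p q + b p q).totalDegree := by simp [Matrix.add_apply]
    _ ≤ max (a p q).totalDegree (b p q).totalDegree := MvPolynomial.totalDegree_add _ _
    _ ≤ n := max_le (ha p q) (hb p q)
  zero_mem' := by intro p q; simp
  smul_mem' := by
    intro c a ha p q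
    calc ((c • a) p q).totalDegree = (c • a p q).totalDegree := by simp [Matrix.smul_apply]
    _ ≤ (a p q).totalDegree := MvPolynomial.totalDegree_smul_le _ _
    _ ≤ n := ha p q

/-- The standard polynomial of degree 3,
`s₃(a,b,c) = ∑_{σ ∈ S₃} sign(σ) · w_{σ(1)} w_{σ(2)} w_{σ(3)}` with `(w₁,w₂,w₃) = (a,b,c)`. -/
def stdS3 {R : Type} [Ring R] (a b c : R) : R :=
  ∑ σ : Equiv.Perm (Fin 3),
    (Equiv.Perm.sign σ : ℤ) • (![a, b, c] (σ 0) * ![a, b, c] (σ 1) * ![a, b, c] (σ 2))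


section Stmt12Aux

theorem stdS3_eq {R : Type} [Ring R] (a b c : R) :
    stdS3 a b c = a*b*c + b*c*a + c*a*b - a*c*b - c*b*a - b*a*c := by
  have huniv : (Finset.univ : Finset (Equiv.Perm (Fin 3))) =
      {Equiv.refl _, Equiv.swap 0 1, Equiv.swap 0 2, Equiv.swap 1 2,
       (Equiv.swap 0 1).trans (Equiv.swap 0 2), (Equiv.swap 0 2).trans (Equiv.swap 0 1)} := by
    decide
  rw [stdS3, huniv]
  rw [Finset.sum_insert (by decide), Finset.sum_insert (by decide),
      Finset.sum_insert (by decide), Finset.sum_insert (by decide),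
      Finset.sum_insert (by decide), Finset.sum_singleton]
  have s1 : (Equiv.Perm.sign (Equiv.refl (Fin 3)) : ℤ) = 1 := by decide
  have s2 : (Equiv.Perm.sign (Equiv.swap (0:Fin 3) 1) : ℤ) = -1 := by decide
  have s3 : (Equiv.Perm.sign (Equiv.swap (0:Fin 3) 2) : ℤ) = -1 := by decide
  have s4 : (Equiv.Perm.sign (Equiv.swap (1:Fin 3) 2) : ℤ) = -1 := by decide
  have s5 : (Equiv.Perm.sign ((Equiv.swap (0:Fin 3) 1).trans (Equiv.swap 0 2)) : ℤ) = 1 := by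
    decide
  have s6 : (Equiv.Perm.sign ((Equiv.swap (0:Fin 3) 2).trans (Equiv.swap 0 1)) : ℤ) = 1 := by
    decide
  rw [s1, s2, s3, s4, s5, s6]
  have h0 : ![a,b,c] (0 : Fin 3) = a := rfl
  have h1 : ![a,b,c] (1 : Fin 3) = b := rfl
  have h2 : ![a,b,c] (2 : Fin 3) = c := rfl
  simp (config := { decide := true }) only [Equiv.swap_apply_def, Equiv.trans_apply,
    Equiv.refl_apply, h0, h1, h2, if_true, if_false, neg_smul, one_smul]
  abel

theorem stdS3_rot {R : Type} [Ring R] (a b c : R) : stdS3 a b c = stdS3 b c a := by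
  rw [stdS3_eq, stdS3_eq]; abel

theorem stdS3_swap12 {R : Type} [Ring R] (a b c : R) : stdS3 b a c = -stdS3 a b c := by
  rw [stdS3_eq, stdS3_eq]; abel

theorem stdS3_swap23 {R : Type} [Ring R] (a b c : R) : stdS3 a c b = -stdS3 a b c := by
  rw [stdS3_eq, stdS3_eq]; abel

theorem stdS3_swap13 {R : Type} [Ring R] (a b c : R) : stdS3 c b a = -stdS3 a b c := by
  rw [stdS3_eq, stdS3_eq]; abel

theorem stdS3_aab {R : Type} [Ring R] (a c : R) : stdS3 a a c = 0 := by
  rw [stdS3_eq]; abel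

theorem stdS3_aba {R : Type} [Ring R] (a b : R) : stdS3 a b a = 0 := by
  rw [stdS3_eq]; abel

theorem stdS3_abb {R : Type} [Ring R] (a b : R) : stdS3 a b b = 0 := by
  rw [stdS3_eq]; abel

theorem pair_identity {R : Type} [CommRing R] (a b : Matrix (Fin 2) (Fin 2) R)
    (ha : a 1 1 = -a 0 0) (hb : b 1 1 = -b 0 0) :
    a * b + b * a = (Matrix.trace (a * b)) • (1 : Matrix (Fin 2) (Fin 2) R) := by
  ext i j
  fin_cases i <;> fin_cases j <;>
    simp [Matrix.mul_apply, Matrix.trace_fin_two, Fin.sum_univ_two, Matrix.one_apply, ha, hb] <;>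
    ring

theorem key4 {R : Type} [CommRing R] (a b c d : Matrix (Fin 2) (Fin 2) R)
    (ha : a 1 1 = -a 0 0) (hb : b 1 1 = -b 0 0) (hc : c 1 1 = -c 0 0) :
    2 * Matrix.trace (a * b * c * d) =
      Matrix.trace (a * b) * Matrix.trace (c * d)
      - Matrix.trace (a * c) * Matrix.trace (b * d)
      + Matrix.trace (b * c) * Matrix.trace (a * d)
      + Matrix.trace (a * b * c) * Matrix.trace d := by
  simp [Matrix.trace_fin_two, Matrix.mul_apply, Fin.sum_univ_two, ha, hb, hc]
  ring

theorem s3_identity {R : Type} [CommRing R] (a b c : Matrix (Fin 2) (Fin 2) R)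
    (ha : a 1 1 = -a 0 0) (hb : b 1 1 = -b 0 0) (hc : c 1 1 = -c 0 0) :
    stdS3 a b c = (3 * Matrix.trace (a*b*c)) • (1 : Matrix (Fin 2) (Fin 2) R) := by
  rw [stdS3_eq]
  ext i j
  fin_cases i <;> fin_cases j <;>
    simp [Matrix.mul_apply, Matrix.trace_fin_two, Fin.sum_univ_two, Matrix.one_apply,
      ha, hb, hc] <;>
    ring

variable (K : Type) [Field K] [CharZero K] (m : ℕ)

theorem trace_genZ (i : Fin m) : Matrix.trace (genZ K 2 m i) = 0 := by
  have h : Matrix.trace (scalarOf K 2 m (Matrix.trace (genY K 2 m i)))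
      = 2 * Matrix.trace (genY K 2 m i) := by
    simp [scalarOf, Matrix.trace_fin_two, Matrix.algebraMap_eq_diagonal]
    ring
  simp only [genZ, Matrix.trace_sub, Matrix.trace_smul, h]
  set t := Matrix.trace (genY K 2 m i)
  have hcast : ((2:ℕ):K) = (2:K) := by norm_num
  rw [hcast, Algebra.smul_def]
  have hC : (algebraMap K (MvPolynomial (Fin m × Fin 2 × Fin 2) K) ((2:K)⁻¹)) * 2 = 1 := by
    rw [← map_ofNat (algebraMap K (MvPolynomial (Fin m × Fin 2 × Fin 2) K)) 2, ← map_mul,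
      inv_mul_cancel₀ two_ne_zero, map_one]
  linear_combination (-t) * hC

theorem entry_genZ (i : Fin m) : genZ K 2 m i 1 1 = -(genZ K 2 m i 0 0) := by
  have h := trace_genZ K m i
  rw [Matrix.trace_fin_two] at h
  linear_combination h

end Stmt12Aux


section Stmt12Aux2

variable (K : Type) [Field K] [CharZero K] (m : ℕ)

theorem scalarOf_smul' (r : K) (f : MvPolynomial (Fin m × Fin 2 × Fin 2) K) :
    scalarOf K 2 m (r • f) = r • scalarOf K 2 m f :=
  map_smul (IsScalarTower.toAlgHom K (MvPolynomial (Fin m × Fin 2 × Fin 2) K) (Mat K 2 m)) r f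

theorem scalarOf_add' (f g : MvPolynomial (Fin m × Fin 2 × Fin 2) K) :
    scalarOf K 2 m (f + g) = scalarOf K 2 m f + scalarOf K 2 m g :=
  map_add (algebraMap (MvPolynomial (Fin m × Fin 2 × Fin 2) K) (Mat K 2 m)) f g

theorem scalarOf_sub' (f g : MvPolynomial (Fin m × Fin 2 × Fin 2) K) :
    scalarOf K 2 m (f - g) = scalarOf K 2 m f - scalarOf K 2 m g :=
  map_sub (algebraMap (MvPolynomial (Fin m × Fin 2 × Fin 2) K) (Mat K 2 m)) f g

theorem scalarOf_mul' (f g : MvPolynomial (Fin m × Fin 2 × Fin 2) K) :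
    scalarOf K 2 m (f * g) = scalarOf K 2 m f * scalarOf K 2 m g :=
  map_mul (algebraMap (MvPolynomial (Fin m × Fin 2 × Fin 2) K) (Mat K 2 m)) f g

theorem half_smul (t : MvPolynomial (Fin m × Fin 2 × Fin 2) K) :
    (2:K)⁻¹ • ((2:MvPolynomial (Fin m × Fin 2 × Fin 2) K) * t) = t := by
  rw [show (2:MvPolynomial (Fin m × Fin 2 × Fin 2) K)
      = algebraMap K (MvPolynomial (Fin m × Fin 2 × Fin 2) K) 2 from (map_ofNat _ 2).symm,
    ← Algebra.smul_def, smul_smul, inv_mul_cancel₀ two_ne_zero, one_smul]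

theorem pairZ (i j : Fin m) :
    genZ K 2 m i * genZ K 2 m j + genZ K 2 m j * genZ K 2 m i
      = scalarOf K 2 m (Matrix.trace (genZ K 2 m i * genZ K 2 m j)) := by
  rw [pair_identity _ _ (entry_genZ K m i) (entry_genZ K m j)]
  exact (Algebra.algebraMap_eq_smul_one _).symm

theorem sqZ (i : Fin m) :
    genZ K 2 m i * genZ K 2 m i
      = (2:K)⁻¹ • scalarOf K 2 m (Matrix.trace (genZ K 2 m i * genZ K 2 m i)) := by
  have h2 : (2:K) • (genZ K 2 m i * genZ K 2 m i)
      = scalarOf K 2 m (Matrix.trace (genZ K 2 m i * genZ K 2 m i)) := by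
    rw [two_smul]; exact pairZ K m i i
  rw [← h2, smul_smul, inv_mul_cancel₀ two_ne_zero, one_smul]

theorem s3Z (i j l : Fin m) :
    stdS3 (genZ K 2 m i) (genZ K 2 m j) (genZ K 2 m l)
      = (3:K) • scalarOf K 2 m (Matrix.trace (genZ K 2 m i * genZ K 2 m j * genZ K 2 m l)) := by
  rw [s3_identity _ _ _ (entry_genZ K m i) (entry_genZ K m j) (entry_genZ K m l),
    show scalarOf K 2 m (Matrix.trace (genZ K 2 m i * genZ K 2 m j * genZ K 2 m l))
      = (Matrix.trace (genZ K 2 m i * genZ K 2 m j * genZ K 2 m l)) • (1 : Mat K 2 m)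
      from Algebra.algebraMap_eq_smul_one _,
    mul_smul,
    show (3:MvPolynomial (Fin m × Fin 2 × Fin 2) K)
      = algebraMap K (MvPolynomial (Fin m × Fin 2 × Fin 2) K) 3 from (map_ofNat _ 3).symm,
    algebraMap_smul]

theorem mem2 (i j : Fin m) :
    scalarOf K 2 m (Matrix.trace (genZ K 2 m i * genZ K 2 m j)) ∈ Ckm0 K 2 m := by
  apply Algebra.subset_adjoin
  refine ⟨1, ![i, j], ?_⟩
  have h : (List.ofFn fun j' : Fin 2 => genZ K 2 m (![i, j] j')).prod
      = genZ K 2 m i * genZ K 2 m j := by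
    simp [List.ofFn_succ]
  rw [h]

theorem mem3 (i j l : Fin m) :
    scalarOf K 2 m (Matrix.trace (genZ K 2 m i * genZ K 2 m j * genZ K 2 m l))
      ∈ Ckm0 K 2 m := by
  apply Algebra.subset_adjoin
  refine ⟨2, ![i, j, l], ?_⟩
  have h : (List.ofFn fun j' : Fin 3 => genZ K 2 m (![i, j, l] j')).prod
      = genZ K 2 m i * genZ K 2 m j * genZ K 2 m l := by
    simp [List.ofFn_succ, mul_assoc]
  rw [h]

end Stmt12Aux2

/-- **Drensky.** For `k = 2`, `m ≥ 2`, the algebra `C_2m⁰` equals the unital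
`K`-subalgebra of `M_2(Ω)` generated by the `z_i²`, the `z_i z_j + z_j z_i` (`i ≤ j`) and
the `s₃(z_{i_1}, z_{i_2}, z_{i_3})` (`i_1 < i_2 < i_3`). -/
theorem stmt12 (K : Type) [Field K] [CharZero K] (m : ℕ) (hm : 2 ≤ m) :
    Ckm0 K 2 m = Algebra.adjoin K
      ({x | ∃ i, x = genZ K 2 m i * genZ K 2 m i} ∪
       {x | ∃ i j, i ≤ j ∧
          x = genZ K 2 m i * genZ K 2 m j + genZ K 2 m j * genZ K 2 m i} ∪
       {x | ∃ i₁ i₂ i₃, i₁ < i₂ ∧ i₂ < i₃ ∧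
          x = stdS3 (genZ K 2 m i₁) (genZ K 2 m i₂) (genZ K 2 m i₃)}) := by
  set A := Algebra.adjoin K
      ({x | ∃ i, x = genZ K 2 m i * genZ K 2 m i} ∪
       {x | ∃ i j, i ≤ j ∧
          x = genZ K 2 m i * genZ K 2 m j + genZ K 2 m j * genZ K 2 m i} ∪
       {x | ∃ i₁ i₂ i₃, i₁ < i₂ ∧ i₂ < i₃ ∧
          x = stdS3 (genZ K 2 m i₁) (genZ K 2 m i₂) (genZ K 2 m i₃)}) with hA
  have hgen3 : ∀ p q r : Fin m, p < q → q < r →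
      stdS3 (genZ K 2 m p) (genZ K 2 m q) (genZ K 2 m r) ∈ A :=
    fun p q r h1 h2 => Algebra.subset_adjoin (Or.inr ⟨p, q, r, h1, h2, rfl⟩)
  have hs3mem : ∀ a b c : Fin m,
      stdS3 (genZ K 2 m a) (genZ K 2 m b) (genZ K 2 m c) ∈ A := by
    intro a b c
    by_cases hab : a = b
    · subst hab; rw [stdS3_aab]; exact zero_mem _
    by_cases hac : a = c
    · subst hac; rw [stdS3_aba]; exact zero_mem _
    by_cases hbc : b = c
    · subst hbc; rw [stdS3_abb]; exact zero_mem _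
    rcases lt_or_gt_of_ne hab with h1 | h1 <;> rcases lt_or_gt_of_ne hbc with h2 | h2 <;>
      rcases lt_or_gt_of_ne hac with h3 | h3
    · exact hgen3 a b c h1 h2
    · exact absurd (h1.trans h2) (not_lt.mpr h3.le)
    · rw [stdS3_swap23]; exact neg_mem (hgen3 a c b h3 h2)
    · rw [stdS3_rot, stdS3_rot]; exact hgen3 c a b h3 h1
    · rw [stdS3_swap12]; exact neg_mem (hgen3 b a c h1 h3)
    · rw [stdS3_rot]; exact hgen3 b c a h2 h3
    · exact absurd (h2.trans h1) (not_lt.mpr h3.le)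
    · rw [stdS3_swap13]; exact neg_mem (hgen3 c b a h2 h1)
  have base2 : ∀ a b : Fin m,
      scalarOf K 2 m (Matrix.trace (genZ K 2 m a * genZ K 2 m b)) ∈ A := by
    intro a b
    rcases le_total a b with hab | hab
    · rw [← pairZ K m a b]
      exact Algebra.subset_adjoin (Or.inl (Or.inr ⟨a, b, hab, rfl⟩))
    · rw [Matrix.trace_mul_comm, ← pairZ K m b a]
      exact Algebra.subset_adjoin (Or.inl (Or.inr ⟨b, a, hab, rfl⟩))
  have base3 : ∀ a b c : Fin m,
      scalarOf K 2 m (Matrix.trace (genZ K 2 m a * genZ K 2 m b * genZ K 2 m c)) ∈ A := by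
    intro a b c
    have h : scalarOf K 2 m (Matrix.trace (genZ K 2 m a * genZ K 2 m b * genZ K 2 m c))
        = (3:K)⁻¹ • stdS3 (genZ K 2 m a) (genZ K 2 m b) (genZ K 2 m c) := by
      rw [s3Z K m a b c, smul_smul, inv_mul_cancel₀ (by norm_num : (3:K) ≠ 0), one_smul]
    rw [h]
    exact Subalgebra.smul_mem _ (hs3mem a b c) _
  have main : ∀ (n : ℕ) (u : List (Fin m)), u.length ≤ n →
      scalarOf K 2 m (Matrix.trace ((u.map (genZ K 2 m)).prod)) ∈ A := by
    intro n
    induction n with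
    | zero =>
      intro u hu
      obtain rfl := List.length_eq_zero_iff.mp (Nat.le_zero.mp hu)
      have h1 : (((List.nil (α := Fin m)).map (genZ K 2 m)).prod) = (1 : Mat K 2 m) := by
        simp
      rw [h1, Matrix.trace_one]
      show (algebraMap (MvPolynomial (Fin m × Fin 2 × Fin 2) K) (Mat K 2 m))
        ((Fintype.card (Fin 2) : ℕ) : MvPolynomial (Fin m × Fin 2 × Fin 2) K) ∈ A
      rw [map_natCast]
      exact natCast_mem A _
    | succ n ih =>
      intro u hu
      match u with
      | [] =>
        have h1 : (((List.nil (α := Fin m)).map (genZ K 2 m)).prod) = (1 : Mat K 2 m) := by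
          simp
        rw [h1, Matrix.trace_one]
        show (algebraMap (MvPolynomial (Fin m × Fin 2 × Fin 2) K) (Mat K 2 m))
          ((Fintype.card (Fin 2) : ℕ) : MvPolynomial (Fin m × Fin 2 × Fin 2) K) ∈ A
        rw [map_natCast]
        exact natCast_mem A _
      | [a] =>
        have h : scalarOf K 2 m (Matrix.trace (([a].map (genZ K 2 m)).prod)) = 0 := by
          simp [trace_genZ, scalarOf]
        rw [h]; exact zero_mem _
      | [a, b] =>
        simp only [List.map_cons, List.map_nil, List.prod_cons, List.prod_nil, mul_one]
        exact base2 a b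
      | [a, b, c] =>
        simp only [List.map_cons, List.map_nil, List.prod_cons, List.prod_nil, mul_one]
        rw [← mul_assoc]
        exact base3 a b c
      | a :: b :: c :: d :: rest =>
        have hu' : rest.length + 4 ≤ n + 1 := by simp at hu; omega
        rw [List.map_cons, List.prod_cons, List.map_cons, List.prod_cons,
          List.map_cons, List.prod_cons]
        set R := (((d :: rest)).map (genZ K 2 m)).prod with hRdef
        have hassoc : genZ K 2 m a * (genZ K 2 m b * (genZ K 2 m c * R))
            = genZ K 2 m a * genZ K 2 m b * genZ K 2 m c * R := by
          rw [mul_assoc, mul_assoc]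
        rw [hassoc]
        have hk := key4 (genZ K 2 m a) (genZ K 2 m b) (genZ K 2 m c) R
          (entry_genZ K m a) (entry_genZ K m b) (entry_genZ K m c)
        have ht : Matrix.trace (genZ K 2 m a * genZ K 2 m b * genZ K 2 m c * R)
            = (2:K)⁻¹ • (Matrix.trace (genZ K 2 m a * genZ K 2 m b)
                * Matrix.trace (genZ K 2 m c * R)
              - Matrix.trace (genZ K 2 m a * genZ K 2 m c)
                * Matrix.trace (genZ K 2 m b * R)
              + Matrix.trace (genZ K 2 m b * genZ K 2 m c)
                * Matrix.trace (genZ K 2 m a * R)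
              + Matrix.trace (genZ K 2 m a * genZ K 2 m b * genZ K 2 m c)
                * Matrix.trace R) := by
          rw [← hk, half_smul]
        rw [ht, scalarOf_smul', scalarOf_add', scalarOf_add', scalarOf_sub',
          scalarOf_mul', scalarOf_mul', scalarOf_mul', scalarOf_mul']
        have hxR : ∀ x : Fin m, scalarOf K 2 m (Matrix.trace (genZ K 2 m x * R)) ∈ A := by
          intro x
          have h : genZ K 2 m x * R = ((x :: d :: rest).map (genZ K 2 m)).prod := by
            rw [List.map_cons, List.prod_cons]
          rw [h]
          exact ih _ (by simp; omega)
        have hR : scalarOf K 2 m (Matrix.trace R) ∈ A := ih _ (by simp; omega)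
        refine Subalgebra.smul_mem _ ?_ _
        exact add_mem (add_mem (sub_mem (mul_mem (base2 a b) (hxR c))
          (mul_mem (base2 a c) (hxR b))) (mul_mem (base2 b c) (hxR a)))
          (mul_mem (base3 a b c) hR)
  apply le_antisymm
  · apply Algebra.adjoin_le
    rintro x ⟨l, w, rfl⟩
    have hlist : (List.ofFn fun j => genZ K 2 m (w j)) = (List.ofFn w).map (genZ K 2 m) := by
      rw [List.map_ofFn]; rfl
    rw [hlist]
    exact main (List.ofFn w).length (List.ofFn w) le_rfl
  · apply Algebra.adjoin_le
    rintro x ((⟨i, rfl⟩ | ⟨i, j, hij, rfl⟩) | ⟨i1, i2, i3, h12, h23, rfl⟩)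
    · rw [sqZ K m i]
      exact Subalgebra.smul_mem _ (mem2 K m i i) _
    · rw [pairZ K m i j]
      exact mem2 K m i j
    · rw [s3Z K m i1 i2 i3]
      exact Subalgebra.smul_mem _ (mem3 K m i1 i2 i3) _
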